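/- Let W be a standard one-dimensional Brownian motion and L^W its local time at 0. Suppose A_t = Φ(L_t^W) where Φ is a continuously differentiable function on [0,∞), and define X_t = √(2 A_t) W_t with A_t > 0. Then the local time at 0 of the continuous semimartingale X satisfies dL_t^X = √(2 A_t) dL_t^W; that is, L_t^X = ∫_0^t √(2 A_s) dL_s^W. -/

import Mathlib

open MeasureTheory Filter

private lemma vol_split (W : ℝ → ℝ) (hW : Continuous W) {a b : ℝ} (ha : 0 ≤ a) (hab : a ≤ b)
    (ε : ℝ) :
    (volume {s ∈ Set.Ioc a b | |W s| ≤ ε}).toReal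
      = (volume {s ∈ Set.Ioc (0:ℝ) b | |W s| ≤ ε}).toReal
        - (volume {s ∈ Set.Ioc (0:ℝ) a | |W s| ≤ ε}).toReal := by
  have hSm : MeasurableSet {s : ℝ | |W s| ≤ ε} :=
    (isClosed_le (hW.abs) continuous_const).measurableSet
  have hmeas : ∀ x y : ℝ, MeasurableSet {s ∈ Set.Ioc x y | |W s| ≤ ε} := by
    intro x y
    exact measurableSet_Ioc.inter hSm
  have hfin : ∀ x y : ℝ, volume {s ∈ Set.Ioc x y | |W s| ≤ ε} ≠ ⊤ := by
    intro x y
    refine ne_top_of_le_ne_top ?_ (measure_mono (fun s hs => hs.1 : _ ⊆ Set.Ioc x y))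
    exact (measure_Ioc_lt_top).ne
  have hunion : {s ∈ Set.Ioc (0:ℝ) a | |W s| ≤ ε} ∪ {s ∈ Set.Ioc a b | |W s| ≤ ε}
      = {s ∈ Set.Ioc (0:ℝ) b | |W s| ≤ ε} := by
    ext s
    simp only [Set.mem_union, Set.mem_setOf_eq, Set.mem_Ioc]
    constructor
    · rintro (⟨⟨h1, h2⟩, h3⟩ | ⟨⟨h1, h2⟩, h3⟩)
      · exact ⟨⟨h1, h2.trans hab⟩, h3⟩
      · exact ⟨⟨lt_of_le_of_lt ha h1, h2⟩, h3⟩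
    · rintro ⟨⟨h1, h2⟩, h3⟩
      rcases le_or_gt s a with h | h
      · exact Or.inl ⟨⟨h1, h⟩, h3⟩
      · exact Or.inr ⟨⟨h, h2⟩, h3⟩
  have hdisj : Disjoint {s ∈ Set.Ioc (0:ℝ) a | |W s| ≤ ε} {s ∈ Set.Ioc a b | |W s| ≤ ε} := by
    refine Set.disjoint_left.2 ?_
    rintro s ⟨⟨_, h2⟩, _⟩ ⟨⟨h3, _⟩, _⟩
    exact absurd h3 (not_lt.2 h2)
  have hadd : volume {s ∈ Set.Ioc (0:ℝ) b | |W s| ≤ ε}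
      = volume {s ∈ Set.Ioc (0:ℝ) a | |W s| ≤ ε} + volume {s ∈ Set.Ioc a b | |W s| ≤ ε} := by
    rw [← hunion, measure_union hdisj (hmeas a b)]
  rw [hadd, ENNReal.toReal_add (hfin 0 a) (hfin a b)]
  ring

private lemma sub_limit (W LW : ℝ → ℝ) (hW : Continuous W)
    (hLW : ∀ t, 0 ≤ t → Tendsto (fun ε : ℝ =>
        (2 * ε)⁻¹ * (volume {s ∈ Set.Ioc (0:ℝ) t | |W s| ≤ ε}).toReal)
      (nhdsWithin 0 (Set.Ioi 0)) (nhds (LW t)))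
    {a b : ℝ} (ha : 0 ≤ a) (hab : a ≤ b) {m : ℝ} (hm : 0 < m) :
    Tendsto (fun ε : ℝ =>
        (2 * ε)⁻¹ * (volume {s ∈ Set.Ioc a b | |W s| ≤ ε / m}).toReal)
      (nhdsWithin 0 (Set.Ioi 0)) (nhds ((LW b - LW a) / m)) := by
  have hbase : Tendsto (fun ε : ℝ =>
      (2 * ε)⁻¹ * (volume {s ∈ Set.Ioc a b | |W s| ≤ ε}).toReal)
      (nhdsWithin 0 (Set.Ioi 0)) (nhds (LW b - LW a)) := by
    have := (hLW b (ha.trans hab)).sub (hLW a ha)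
    refine this.congr fun ε => ?_
    rw [vol_split W hW ha hab ε]
    ring
  have hdivm : Tendsto (fun ε : ℝ => ε / m) (nhdsWithin 0 (Set.Ioi 0))
      (nhdsWithin 0 (Set.Ioi 0)) := by
    apply tendsto_nhdsWithin_of_tendsto_nhds_of_eventually_within
    · simpa using (tendsto_id.mono_right nhdsWithin_le_nhds :
        Tendsto (fun ε : ℝ => ε) (nhdsWithin 0 (Set.Ioi 0)) (nhds 0)).div_const m
    · exact eventually_mem_nhdsWithin.mono fun x hx => div_pos hx hm
  have hcomp := (hbase.comp hdivm).const_mul m⁻¹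
  have hval : (LW b - LW a) / m = m⁻¹ * (LW b - LW a) := by
    rw [div_eq_mul_inv, mul_comm]
  rw [hval]
  refine hcomp.congr fun ε => ?_
  simp only [Function.comp_apply]
  rw [← mul_assoc]
  congr 1
  rw [← mul_inv]
  congr 1
  field_simp

private lemma piece_arith {c C η δ1 L a : ℝ} (hc : 0 < c) (hη : 0 < η) (hηc : η ≤ c / 2)
    (hη1 : η ≤ 1) (hca : c ≤ a) (haC : a ≤ C) (hδ1 : 0 ≤ δ1) (hL : 0 ≤ L) :
    (a + η) ^ 2 * (L / (a - η) + δ1) - (a - η) * L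
        ≤ (8 * (C + 1) * η / c) * L + (C + 1) ^ 2 * δ1 ∧
      (a + η) * L - (a - η) ^ 2 * (L / (a + η) - δ1)
        ≤ (8 * (C + 1) * η / c) * L + (C + 1) ^ 2 * δ1 := by
  set m := a - η with hmdef
  set M := a + η with hMdef
  have hm : c / 2 ≤ m := by simp only [hmdef]; linarith
  have hm0 : 0 < m := lt_of_lt_of_le (by linarith) hm
  have hM0 : 0 < M := by simp only [hMdef]; linarith
  have hmM : m ≤ M := by simp only [hmdef, hMdef]; linarith
  have hMC : M ≤ C + 1 := by simp only [hMdef]; linarith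
  have hCpos : 0 < C + 1 := lt_of_lt_of_le hM0 hMC
  have hnumle : M ^ 2 - m ^ 2 ≤ 4 * (C + 1) * η := by
    have hnum : M ^ 2 - m ^ 2 = 4 * a * η := by simp only [hmdef, hMdef]; ring
    rw [hnum]
    have : a ≤ C + 1 := by linarith
    nlinarith
  have hnn : 0 ≤ M ^ 2 - m ^ 2 := by nlinarith
  have hdivkey : (M ^ 2 - m ^ 2) / m ≤ 8 * (C + 1) * η / c := by
    have h1 : (M ^ 2 - m ^ 2) / m ≤ (4 * (C + 1) * η) / (c / 2) := by
      gcongr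
    have h2 : (4 * (C + 1) * η) / (c / 2) = 8 * (C + 1) * η / c := by
      field_simp
      ring
    linarith [h2 ▸ h1]
  have h1 : M ^ 2 / m - m ≤ 8 * (C + 1) * η / c := by
    have he : M ^ 2 / m - m = (M ^ 2 - m ^ 2) / m := by field_simp
    rw [he]; exact hdivkey
  have h2 : M - m ^ 2 / M ≤ 8 * (C + 1) * η / c := by
    have he : M - m ^ 2 / M = (M ^ 2 - m ^ 2) / M := by field_simp
    have hle : (M ^ 2 - m ^ 2) / M ≤ (M ^ 2 - m ^ 2) / m := by gcongr
    rw [he]; exact hle.trans hdivkey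
  have hM2 : M ^ 2 ≤ (C + 1) ^ 2 := by nlinarith
  have hm2 : m ^ 2 ≤ (C + 1) ^ 2 := by nlinarith
  constructor
  · have expand : M ^ 2 * (L / m + δ1) - m * L = (M ^ 2 / m - m) * L + M ^ 2 * δ1 := by ring
    rw [expand]
    exact add_le_add (mul_le_mul_of_nonneg_right h1 hL) (mul_le_mul_of_nonneg_right hM2 hδ1)
  · have expand : M * L - m ^ 2 * (L / M - δ1) = (M - m ^ 2 / M) * L + m ^ 2 * δ1 := by ring
    rw [expand]
    exact add_le_add (mul_le_mul_of_nonneg_right h2 hL) (mul_le_mul_of_nonneg_right hm2 hδ1)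

set_option maxHeartbeats 2000000 in
/-- Pathwise formulation of `dL^X_t = √(2 A_t) dL^W_t` for `X_t = √(2 A_t) W_t`,
`A_t = Φ(L^W_t)`.  The local times at `0` of `W` and of `X` are characterized by
the occupation-time limits `L^M_t = lim_{ε→0} (2ε)⁻¹ ∫_0^t 1_{|M_s|≤ε} d⟨M⟩_s`,
with `d⟨W⟩_s = ds` and `d⟨X⟩_s = 2 A_s ds`, and `μW` denotes the
Lebesgue–Stieltjes measure of the continuous nondecreasing function `L^W`,
which is carried by the zero set of `W`. -/
theorem stmt5 (W A X LW LX : ℝ → ℝ) (Φ : ℝ → ℝ)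
    (hW : Continuous W) (hΦ : ContDiff ℝ 1 Φ)
    (hA : ∀ t, A t = Φ (LW t)) (hApos : ∀ t, 0 < A t)
    (hX : ∀ t, X t = Real.sqrt (2 * A t) * W t)
    (hLWmono : Monotone LW) (hLWcont : Continuous LW) (hLW0 : LW 0 = 0)
    (μW : Measure ℝ)
    (hμW : ∀ a b, a ≤ b → μW (Set.Ioc a b) = ENNReal.ofReal (LW b - LW a))
    (hμWsupp : μW {s | W s ≠ 0} = 0)
    (hLW : ∀ t, 0 ≤ t →
      Tendsto (fun ε : ℝ =>
          (2 * ε)⁻¹ * (volume {s ∈ Set.Ioc (0:ℝ) t | |W s| ≤ ε}).toReal)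
        (nhdsWithin 0 (Set.Ioi 0)) (nhds (LW t)))
    (hLX : ∀ t, 0 ≤ t →
      Tendsto (fun ε : ℝ =>
          (2 * ε)⁻¹ * ∫ s in Set.Ioc (0:ℝ) t,
            Set.indicator {s | |X s| ≤ ε} (fun s => 2 * A s) s)
        (nhdsWithin 0 (Set.Ioi 0)) (nhds (LX t)))
    (hLX0 : LX 0 = 0) :
    ∀ t, 0 ≤ t → LX t = ∫ s in Set.Ioc (0:ℝ) t, Real.sqrt (2 * A s) ∂μW := by
  intro t ht
  have hAcont : Continuous A := by
    have h1 : Continuous fun s => Φ (LW s) := hΦ.continuous.comp hLWcont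
    have h2 : A = fun s => Φ (LW s) := funext hA
    rw [h2]; exact h1
  set g : ℝ → ℝ := fun s => 2 * A s with hgdef
  have hgcont : Continuous g := continuous_const.mul hAcont
  have hgpos : ∀ s, 0 < g s := fun s => by
    simp only [hgdef]; exact mul_pos two_pos (hApos s)
  set f : ℝ → ℝ := fun s => Real.sqrt (2 * A s) with hfdef
  have hfcont : Continuous f := Real.continuous_sqrt.comp hgcont
  have hfpos : ∀ s, 0 < f s := fun s => Real.sqrt_pos.2 (hgpos s)
  have hfsq : ∀ s, f s ^ 2 = g s := fun s => Real.sq_sqrt (hgpos s).le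
  have hXabs : ∀ s, |X s| = f s * |W s| := fun s => by
    rw [hX s, abs_mul, abs_of_nonneg (Real.sqrt_nonneg _)]
  have hXcont : Continuous X := by
    have : X = fun s => f s * W s := funext hX
    rw [this]; exact hfcont.mul hW
  obtain ⟨x₀, hx₀, hminOn⟩ :=
    isCompact_Icc.exists_isMinOn (Set.nonempty_Icc.2 ht) hfcont.continuousOn
  obtain ⟨x₁, hx₁, hmaxOn⟩ :=
    isCompact_Icc.exists_isMaxOn (Set.nonempty_Icc.2 ht) hfcont.continuousOn
  set c := f x₀ with hcdef
  set C := f x₁ with hCdef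
  have hc : 0 < c := hfpos x₀
  have hcle : ∀ s ∈ Set.Icc (0:ℝ) t, c ≤ f s := fun s hs => hminOn hs
  have hCge : ∀ s ∈ Set.Icc (0:ℝ) t, f s ≤ C := fun s hs => hmaxOn hs
  have hcC : c ≤ C := hCge x₀ hx₀
  have hC1 : 0 < C + 1 := by linarith
  have hLWt : 0 ≤ LW t := by rw [← hLW0]; exact hLWmono ht
  -- integrability wrt μW
  have hμWfin : ∀ a b : ℝ, a ≤ b → μW (Set.Ioc a b) ≠ ⊤ := fun a b hab => by
    rw [hμW a b hab]; exact ENNReal.ofReal_ne_top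
  have hμWIoc : ∀ a b : ℝ, a ≤ b → (μW (Set.Ioc a b)).toReal = LW b - LW a := fun a b hab => by
    rw [hμW a b hab, ENNReal.toReal_ofReal (sub_nonneg.2 (hLWmono hab))]
  have hIntμW : ∀ a b : ℝ, IntegrableOn f (Set.Ioc a b) μW := by
    intro a b
    rcases le_or_gt a b with hab | hab
    · obtain ⟨Cb, hCb⟩ := isCompact_Icc.exists_bound_of_continuousOn
        (hfcont.continuousOn : ContinuousOn f (Set.Icc a b))
      refine Measure.integrableOn_of_bounded (M := Cb) (hμWfin a b hab) hfcont.aestronglyMeasurable ?_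
      exact (ae_restrict_iff' measurableSet_Ioc).2
        (ae_of_all _ fun s hs => hCb s (Set.Ioc_subset_Icc_self hs))
    · rw [Set.Ioc_eq_empty (not_lt.2 hab.le)]; exact integrableOn_empty
  -- main limit
  refine tendsto_nhds_unique (hLX t ht) ?_
  rw [Metric.tendsto_nhds]
  intro δ hδ
  -- choice of η
  set η := min (min 1 (c / 2)) (δ * c / (32 * (C + 1) * (LW t + 1))) with hηdef
  have hηpos : 0 < η := lt_min (lt_min one_pos (by positivity)) (by positivity)
  have hη1 : η ≤ 1 := (min_le_left _ _).trans (min_le_left _ _)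
  have hηc : η ≤ c / 2 := (min_le_left _ _).trans (min_le_right _ _)
  have hηδ : η ≤ δ * c / (32 * (C + 1) * (LW t + 1)) := min_le_right _ _
  -- uniform continuity
  obtain ⟨δ0, hδ0pos, hUC⟩ := Metric.uniformContinuousOn_iff.1
    (isCompact_Icc.uniformContinuousOn_of_continuous
      (hfcont.continuousOn : ContinuousOn f (Set.Icc 0 t))) η hηpos
  -- partition
  set n := Nat.ceil (t / δ0) + 1 with hndef
  have hnpos : 0 < (n:ℝ) := by positivity
  have hmesh : t / n < δ0 := by
    rw [div_lt_iff₀ hnpos]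
    have h1 : t / δ0 ≤ (Nat.ceil (t / δ0) : ℝ) := Nat.le_ceil _
    have h2 : ((Nat.ceil (t / δ0) : ℕ) : ℝ) < (n:ℝ) := by
      rw [hndef]; push_cast; linarith
    have h3 : t = (t / δ0) * δ0 := by field_simp
    calc t = (t / δ0) * δ0 := h3
      _ ≤ ((Nat.ceil (t / δ0) : ℕ) : ℝ) * δ0 := mul_le_mul_of_nonneg_right h1 hδ0pos.le
      _ < (n:ℝ) * δ0 := by
          exact mul_lt_mul_of_pos_right h2 hδ0pos
      _ = δ0 * n := by ring
  set p : ℕ → ℝ := fun j => j * (t / n) with hpdef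
  have hp0 : p 0 = 0 := by simp [hpdef]
  have hpn : p n = t := by
    simp only [hpdef]; field_simp
  have htn0 : 0 ≤ t / n := div_nonneg ht hnpos.le
  have hpnonneg : ∀ j, 0 ≤ p j := fun j => mul_nonneg (Nat.cast_nonneg j) htn0
  have hpmono : ∀ j : ℕ, p j ≤ p (j+1) := by
    intro j
    simp only [hpdef]
    apply mul_le_mul_of_nonneg_right _ htn0
    push_cast; linarith
  have hplet : ∀ j : ℕ, j ≤ n → p j ≤ t := by
    intro j hj
    simp only [hpdef]
    calc (j:ℝ) * (t / n) ≤ (n:ℝ) * (t / n) :=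
          mul_le_mul_of_nonneg_right (Nat.cast_le.2 hj) htn0
      _ = t := by field_simp
  have hstep : ∀ j : ℕ, p (j+1) - p j = t / n := by
    intro j; simp only [hpdef]; push_cast; ring
  -- piece bounds on f
  have hpin : ∀ j : ℕ, j < n → p j ∈ Set.Icc (0:ℝ) t := fun j hj =>
    ⟨hpnonneg j, hplet j hj.le⟩
  have hfb : ∀ j : ℕ, j < n → ∀ s ∈ Set.Ioc (p j) (p (j+1)),
      f (p j) - η ≤ f s ∧ f s ≤ f (p j) + η := by
    intro j hj s hs
    have hjn : j + 1 ≤ n := hj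
    have hsIcc : s ∈ Set.Icc (0:ℝ) t :=
      ⟨(hpnonneg j).trans hs.1.le, hs.2.trans (hplet (j+1) hjn)⟩
    have hdist : dist s (p j) < δ0 := by
      rw [Real.dist_eq, abs_of_nonneg (by linarith [hs.1.le])]
      have h1 := hs.2
      have h2 := hstep j
      linarith [hmesh]
    have := hUC s hsIcc (p j) (hpin j hj) hdist
    rw [Real.dist_eq] at this
    have := abs_lt.1 this
    constructor <;> linarith [this.1, this.2]
  have hmj : ∀ j : ℕ, j < n → 0 < f (p j) - η := by
    intro j hj
    have := hcle (p j) (hpin j hj)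
    linarith
  have hMj : ∀ j : ℕ, j < n → 0 < f (p j) + η := by
    intro j hj
    have := hcle (p j) (hpin j hj)
    linarith
  -- constants
  set K2 : ℝ := (C + 1) ^ 2 with hK2def
  set δ1 := δ / (4 * (n * K2 + 1)) with hδ1def
  have hδ1pos : 0 < δ1 := by
    apply div_pos hδ
    have : (0:ℝ) ≤ n * K2 := by positivity
    linarith
  -- eventual control of the subinterval occupation quantities
  have hev : ∀ᶠ ε in nhdsWithin (0:ℝ) (Set.Ioi 0), (0 < ε) ∧
      ∀ j ∈ Finset.range n,
        ((2*ε)⁻¹ * (volume {s ∈ Set.Ioc (p j) (p (j+1)) |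
            |W s| ≤ ε / (f (p j) - η)}).toReal
          ≤ (LW (p (j+1)) - LW (p j)) / (f (p j) - η) + δ1) ∧
        ((LW (p (j+1)) - LW (p j)) / (f (p j) + η) - δ1
          ≤ (2*ε)⁻¹ * (volume {s ∈ Set.Ioc (p j) (p (j+1)) |
            |W s| ≤ ε / (f (p j) + η)}).toReal) := by
    refine (eventually_mem_nhdsWithin.mono fun ε hε => hε).and ?_
    rw [Finset.eventually_all]
    intro j hj
    rw [Finset.mem_range] at hj
    have h1 := sub_limit W LW hW hLW (hpnonneg j) (hpmono j) (hmj j hj)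
    have h2 := sub_limit W LW hW hLW (hpnonneg j) (hpmono j) (hMj j hj)
    refine Filter.Eventually.and ?_ ?_
    · exact (h1.eventually_lt_const (by linarith)).mono fun ε h => h.le
    · exact (h2.eventually_const_lt (by linarith)).mono fun ε h => h.le
  filter_upwards [hev] with ε hevε
  obtain ⟨hε, hjs⟩ := hevε
  have h2ε : (0:ℝ) < 2 * ε := by linarith
  have hinv : (0:ℝ) ≤ (2*ε)⁻¹ := inv_nonneg.2 h2ε.le
  -- indicator set
  set S := {s : ℝ | |X s| ≤ ε} with hSdef
  have hSmeas : MeasurableSet S := (isClosed_le hXcont.abs continuous_const).measurableSet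
  have hIndInt : ∀ a b : ℝ, IntegrableOn (S.indicator g) (Set.Ioc a b) volume :=
    fun a b => (hgcont.integrableOn_Ioc).indicator hSmeas
  -- splitting the integrals over the partition
  have hGsplit : (∫ s in Set.Ioc (0:ℝ) t, S.indicator g s)
      = ∑ j ∈ Finset.range n, ∫ s in Set.Ioc (p j) (p (j+1)), S.indicator g s := by
    have hInt : ∀ k, k < n → IntervalIntegrable (S.indicator g) volume (p k) (p (k+1)) := by
      intro k _
      rw [intervalIntegrable_iff]
      exact hIndInt _ _
    calc (∫ s in Set.Ioc (0:ℝ) t, S.indicator g s)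
        = ∫ s in (0:ℝ)..t, S.indicator g s := (intervalIntegral.integral_of_le ht).symm
      _ = ∫ s in (p 0)..(p n), S.indicator g s := by rw [hp0, hpn]
      _ = ∑ j ∈ Finset.range n, ∫ s in (p j)..(p (j+1)), S.indicator g s :=
          (intervalIntegral.sum_integral_adjacent_intervals hInt).symm
      _ = ∑ j ∈ Finset.range n, ∫ s in Set.Ioc (p j) (p (j+1)), S.indicator g s :=
          Finset.sum_congr rfl fun j _ => intervalIntegral.integral_of_le (hpmono j)
  have hIsplit : (∫ s in Set.Ioc (0:ℝ) t, f s ∂μW)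
      = ∑ j ∈ Finset.range n, ∫ s in Set.Ioc (p j) (p (j+1)), f s ∂μW := by
    have hInt : ∀ k, k < n → IntervalIntegrable f μW (p k) (p (k+1)) := by
      intro k _
      rw [intervalIntegrable_iff]
      exact hIntμW _ _
    calc (∫ s in Set.Ioc (0:ℝ) t, f s ∂μW)
        = ∫ s in (0:ℝ)..t, f s ∂μW := (intervalIntegral.integral_of_le ht).symm
      _ = ∫ s in (p 0)..(p n), f s ∂μW := by rw [hp0, hpn]
      _ = ∑ j ∈ Finset.range n, ∫ s in (p j)..(p (j+1)), f s ∂μW :=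
          (intervalIntegral.sum_integral_adjacent_intervals hInt).symm
      _ = ∑ j ∈ Finset.range n, ∫ s in Set.Ioc (p j) (p (j+1)), f s ∂μW :=
          Finset.sum_congr rfl fun j _ => intervalIntegral.integral_of_le (hpmono j)
  -- per-piece estimates on the occupation integrals
  have hup : ∀ j : ℕ, j < n →
      (2*ε)⁻¹ * ∫ s in Set.Ioc (p j) (p (j+1)), S.indicator g s
        ≤ (f (p j) + η)^2 * ((2*ε)⁻¹ * (volume {s ∈ Set.Ioc (p j) (p (j+1)) |
            |W s| ≤ ε / (f (p j) - η)}).toReal) := by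
    intro j hj
    have hM2 : (0:ℝ) ≤ (f (p j) + η)^2 := sq_nonneg _
    have step1 : (∫ s in Set.Ioc (p j) (p (j+1)), S.indicator g s)
        = ∫ s in Set.Ioc (p j) (p (j+1)) ∩ S, g s := setIntegral_indicator hSmeas
    have hvolfin : volume (Set.Ioc (p j) (p (j+1)) ∩ {s | |W s| ≤ ε / (f (p j) - η)}) ≠ ⊤ :=
      ne_top_of_le_ne_top measure_Ioc_lt_top.ne (measure_mono Set.inter_subset_left)
    have step2 : (∫ s in Set.Ioc (p j) (p (j+1)) ∩ S, g s)
        ≤ (f (p j) + η)^2 * (volume (Set.Ioc (p j) (p (j+1)) ∩ S)).toReal := by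
      have hconst : IntegrableOn (fun _ => (f (p j) + η)^2)
          (Set.Ioc (p j) (p (j+1)) ∩ S) volume :=
        integrableOn_const (lt_of_le_of_lt
          (measure_mono Set.inter_subset_left) measure_Ioc_lt_top).ne
      have hmono := setIntegral_mono_on
        ((hgcont.integrableOn_Ioc).mono_set Set.inter_subset_left) hconst
        (measurableSet_Ioc.inter hSmeas) ?_
      · rw [setIntegral_const, smul_eq_mul, mul_comm] at hmono
        exact hmono
      · intro s hs
        have hb := (hfb j hj s hs.1).2
        rw [← hfsq s]
        exact pow_le_pow_left₀ (hfpos s).le hb 2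
    have hincl : Set.Ioc (p j) (p (j+1)) ∩ S
        ⊆ Set.Ioc (p j) (p (j+1)) ∩ {s | |W s| ≤ ε / (f (p j) - η)} := by
      rintro s ⟨hs1, hs2⟩
      refine ⟨hs1, ?_⟩
      have hfs := (hfb j hj s hs1).1
      have habs : |X s| ≤ ε := hs2
      rw [hXabs s] at habs
      have hWnn : 0 ≤ |W s| := abs_nonneg _
      have : (f (p j) - η) * |W s| ≤ ε := by
        calc (f (p j) - η) * |W s| ≤ f s * |W s| := mul_le_mul_of_nonneg_right hfs hWnn
          _ ≤ ε := habs
      exact (le_div_iff₀ (hmj j hj)).2 (by linarith [mul_comm (f (p j) - η) |W s| ▸ this])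
    have step3 : (volume (Set.Ioc (p j) (p (j+1)) ∩ S)).toReal
        ≤ (volume {s ∈ Set.Ioc (p j) (p (j+1)) | |W s| ≤ ε / (f (p j) - η)}).toReal :=
      ENNReal.toReal_mono hvolfin (measure_mono hincl)
    calc (2*ε)⁻¹ * ∫ s in Set.Ioc (p j) (p (j+1)), S.indicator g s
        ≤ (2*ε)⁻¹ * ((f (p j) + η)^2 *
            (volume {s ∈ Set.Ioc (p j) (p (j+1)) | |W s| ≤ ε / (f (p j) - η)}).toReal) := by
          apply mul_le_mul_of_nonneg_left _ hinv
          rw [step1]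
          exact step2.trans (mul_le_mul_of_nonneg_left step3 hM2)
      _ = (f (p j) + η)^2 * ((2*ε)⁻¹ * (volume {s ∈ Set.Ioc (p j) (p (j+1)) |
            |W s| ≤ ε / (f (p j) - η)}).toReal) := by ring
  have hdown : ∀ j : ℕ, j < n →
      (f (p j) - η)^2 * ((2*ε)⁻¹ * (volume {s ∈ Set.Ioc (p j) (p (j+1)) |
            |W s| ≤ ε / (f (p j) + η)}).toReal)
        ≤ (2*ε)⁻¹ * ∫ s in Set.Ioc (p j) (p (j+1)), S.indicator g s := by
    intro j hj
    have hm2 : (0:ℝ) ≤ (f (p j) - η)^2 := sq_nonneg _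
    have step1 : (∫ s in Set.Ioc (p j) (p (j+1)), S.indicator g s)
        = ∫ s in Set.Ioc (p j) (p (j+1)) ∩ S, g s := setIntegral_indicator hSmeas
    have hincl : Set.Ioc (p j) (p (j+1)) ∩ {s | |W s| ≤ ε / (f (p j) + η)}
        ⊆ Set.Ioc (p j) (p (j+1)) ∩ S := by
      rintro s ⟨hs1, hs2⟩
      refine ⟨hs1, ?_⟩
      have hfs := (hfb j hj s hs1).2
      have hWnn : 0 ≤ |W s| := abs_nonneg _
      have h1 : |W s| ≤ ε / (f (p j) + η) := hs2
      show |X s| ≤ ε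
      rw [hXabs s]
      calc f s * |W s| ≤ (f (p j) + η) * |W s| := mul_le_mul_of_nonneg_right hfs hWnn
        _ ≤ (f (p j) + η) * (ε / (f (p j) + η)) :=
            mul_le_mul_of_nonneg_left h1 (hMj j hj).le
        _ = ε := by field_simp; exact div_self (hMj j hj).ne'
    have step2 : (f (p j) - η)^2 * (volume {s ∈ Set.Ioc (p j) (p (j+1)) |
          |W s| ≤ ε / (f (p j) + η)}).toReal
        ≤ ∫ s in Set.Ioc (p j) (p (j+1)) ∩ {s | |W s| ≤ ε / (f (p j) + η)}, g s := by
      have hWm : MeasurableSet {s : ℝ | |W s| ≤ ε / (f (p j) + η)} :=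
        (isClosed_le hW.abs continuous_const).measurableSet
      have hconst : IntegrableOn (fun _ => (f (p j) - η)^2)
          (Set.Ioc (p j) (p (j+1)) ∩ {s | |W s| ≤ ε / (f (p j) + η)}) volume :=
        integrableOn_const (lt_of_le_of_lt
          (measure_mono Set.inter_subset_left) measure_Ioc_lt_top).ne
      have hmono := setIntegral_mono_on hconst
        ((hgcont.integrableOn_Ioc).mono_set Set.inter_subset_left)
        (measurableSet_Ioc.inter hWm) ?_
      · rw [setIntegral_const, smul_eq_mul, mul_comm] at hmono
        exact hmono
      · intro s hs
        have hb := (hfb j hj s hs.1).1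
        rw [← hfsq s]
        exact pow_le_pow_left₀ (hmj j hj).le hb 2
    have step3 : (∫ s in Set.Ioc (p j) (p (j+1)) ∩ {s | |W s| ≤ ε / (f (p j) + η)}, g s)
        ≤ ∫ s in Set.Ioc (p j) (p (j+1)) ∩ S, g s := by
      apply setIntegral_mono_set ((hgcont.integrableOn_Ioc).mono_set Set.inter_subset_left)
        (ae_of_all _ fun s => (hgpos s).le)
      exact HasSubset.Subset.eventuallyLE hincl
    calc (f (p j) - η)^2 * ((2*ε)⁻¹ * (volume {s ∈ Set.Ioc (p j) (p (j+1)) |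
            |W s| ≤ ε / (f (p j) + η)}).toReal)
        = (2*ε)⁻¹ * ((f (p j) - η)^2 * (volume {s ∈ Set.Ioc (p j) (p (j+1)) |
            |W s| ≤ ε / (f (p j) + η)}).toReal) := by ring
      _ ≤ (2*ε)⁻¹ * ∫ s in Set.Ioc (p j) (p (j+1)), S.indicator g s := by
          apply mul_le_mul_of_nonneg_left _ hinv
          rw [step1]
          exact step2.trans step3
  -- per-piece bounds for the μW integral
  have hμpiece : ∀ j : ℕ, j < n →
      (f (p j) - η) * (LW (p (j+1)) - LW (p j))
          ≤ (∫ s in Set.Ioc (p j) (p (j+1)), f s ∂μW) ∧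
      (∫ s in Set.Ioc (p j) (p (j+1)), f s ∂μW)
          ≤ (f (p j) + η) * (LW (p (j+1)) - LW (p j)) := by
    intro j hj
    have hμfin : μW (Set.Ioc (p j) (p (j+1))) < ⊤ :=
      lt_of_le_of_ne le_top (hμWfin _ _ (hpmono j))
    have hconstm : IntegrableOn (fun _ => f (p j) - η) (Set.Ioc (p j) (p (j+1))) μW :=
      integrableOn_const hμfin.ne
    have hconstM : IntegrableOn (fun _ => f (p j) + η) (Set.Ioc (p j) (p (j+1))) μW :=
      integrableOn_const hμfin.ne
    constructor
    · have := setIntegral_mono_on hconstm (hIntμW _ _) measurableSet_Ioc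
        (fun s hs => (hfb j hj s hs).1)
      rw [setIntegral_const, smul_eq_mul, measureReal_def, hμWIoc _ _ (hpmono j), mul_comm] at this
      exact this
    · have := setIntegral_mono_on (hIntμW _ _) hconstM measurableSet_Ioc
        (fun s hs => (hfb j hj s hs).2)
      rw [setIntegral_const, smul_eq_mul, measureReal_def, hμWIoc _ _ (hpmono j), mul_comm] at this
      exact this
  -- combine the per-piece bounds
  have hΔLnn : ∀ j : ℕ, 0 ≤ LW (p (j+1)) - LW (p j) :=
    fun j => sub_nonneg.2 (hLWmono (hpmono j))
  have hperj : ∀ j ∈ Finset.range n,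
      (((2*ε)⁻¹ * ∫ s in Set.Ioc (p j) (p (j+1)), S.indicator g s)
          - (∫ s in Set.Ioc (p j) (p (j+1)), f s ∂μW)
        ≤ (8 * (C + 1) * η / c) * (LW (p (j+1)) - LW (p j)) + K2 * δ1) ∧
      ((∫ s in Set.Ioc (p j) (p (j+1)), f s ∂μW)
          - ((2*ε)⁻¹ * ∫ s in Set.Ioc (p j) (p (j+1)), S.indicator g s)
        ≤ (8 * (C + 1) * η / c) * (LW (p (j+1)) - LW (p j)) + K2 * δ1) := by
    intro j hjmem
    have hj := Finset.mem_range.1 hjmem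
    have harith := piece_arith hc hηpos hηc hη1 (hcle (p j) (hpin j hj))
      (hCge (p j) (hpin j hj)) hδ1pos.le (hΔLnn j)
    obtain ⟨hj1, hj2⟩ := hjs j hjmem
    constructor
    · have hT : (2*ε)⁻¹ * ∫ s in Set.Ioc (p j) (p (j+1)), S.indicator g s
          ≤ (f (p j) + η)^2 * ((LW (p (j+1)) - LW (p j)) / (f (p j) - η) + δ1) :=
        (hup j hj).trans (mul_le_mul_of_nonneg_left hj1 (sq_nonneg _))
      have hI := (hμpiece j hj).1
      have := harith.1
      simp only [hK2def]
      linarith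
    · have hT : (f (p j) - η)^2 * ((LW (p (j+1)) - LW (p j)) / (f (p j) + η) - δ1)
          ≤ (2*ε)⁻¹ * ∫ s in Set.Ioc (p j) (p (j+1)), S.indicator g s :=
        (mul_le_mul_of_nonneg_left hj2 (sq_nonneg _)).trans (hdown j hj)
      have hI := (hμpiece j hj).2
      have := harith.2
      simp only [hK2def]
      linarith
  -- sum bound
  have hsumK : ∑ j ∈ Finset.range n,
      ((8 * (C + 1) * η / c) * (LW (p (j+1)) - LW (p j)) + K2 * δ1)
      = (8 * (C + 1) * η / c) * LW t + n * (K2 * δ1) := by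
    rw [Finset.sum_add_distrib, ← Finset.mul_sum,
      Finset.sum_range_sub (fun j => LW (p j)) n, hp0, hpn, hLW0, sub_zero,
      Finset.sum_const, Finset.card_range, nsmul_eq_mul]
  have hbound1 : (8 * (C + 1) * η / c) * LW t ≤ δ / 4 := by
    have hXX : η * (32 * (C + 1) * (LW t + 1)) ≤ δ * c :=
      (le_div_iff₀ (by positivity)).1 hηδ
    rw [div_mul_eq_mul_div, div_le_iff₀ hc]
    nlinarith [mul_nonneg (mul_nonneg hC1.le hηpos.le) hLWt]
  have hbound2 : (n:ℝ) * (K2 * δ1) ≤ δ / 4 := by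
    have hq : (0:ℝ) ≤ (n:ℝ) * K2 := by positivity
    have heq : (n:ℝ) * (K2 * δ1) = ((n:ℝ) * K2) * (δ / (4 * ((n:ℝ) * K2 + 1))) := by
      rw [hδ1def]; ring
    rw [heq]
    rw [mul_div_assoc'] -- maybe not needed
    rw [div_le_div_iff₀ (by positivity) (by norm_num)]
    nlinarith [hδ.le]
  -- final computation
  rw [Real.dist_eq]
  have hGsum : (2*ε)⁻¹ * ∫ s in Set.Ioc (0:ℝ) t, S.indicator g s
      = ∑ j ∈ Finset.range n, (2*ε)⁻¹ * ∫ s in Set.Ioc (p j) (p (j+1)), S.indicator g s := by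
    rw [hGsplit, Finset.mul_sum]
  have hupSum : (2*ε)⁻¹ * (∫ s in Set.Ioc (0:ℝ) t, S.indicator g s)
      - (∫ s in Set.Ioc (0:ℝ) t, f s ∂μW) ≤ δ / 2 := by
    rw [hGsum, hIsplit, ← Finset.sum_sub_distrib]
    calc ∑ j ∈ Finset.range n,
          ((2*ε)⁻¹ * (∫ s in Set.Ioc (p j) (p (j+1)), S.indicator g s)
            - ∫ s in Set.Ioc (p j) (p (j+1)), f s ∂μW)
        ≤ ∑ j ∈ Finset.range n,
          ((8 * (C + 1) * η / c) * (LW (p (j+1)) - LW (p j)) + K2 * δ1) :=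
          Finset.sum_le_sum fun j hj => (hperj j hj).1
      _ = (8 * (C + 1) * η / c) * LW t + n * (K2 * δ1) := hsumK
      _ ≤ δ / 4 + δ / 4 := add_le_add hbound1 hbound2
      _ = δ / 2 := by ring
  have hdownSum : (∫ s in Set.Ioc (0:ℝ) t, f s ∂μW)
      - (2*ε)⁻¹ * (∫ s in Set.Ioc (0:ℝ) t, S.indicator g s) ≤ δ / 2 := by
    rw [hGsum, hIsplit, ← Finset.sum_sub_distrib]
    calc ∑ j ∈ Finset.range n,
          ((∫ s in Set.Ioc (p j) (p (j+1)), f s ∂μW)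
            - (2*ε)⁻¹ * ∫ s in Set.Ioc (p j) (p (j+1)), S.indicator g s)
        ≤ ∑ j ∈ Finset.range n,
          ((8 * (C + 1) * η / c) * (LW (p (j+1)) - LW (p j)) + K2 * δ1) :=
          Finset.sum_le_sum fun j hj => (hperj j hj).2
      _ = (8 * (C + 1) * η / c) * LW t + n * (K2 * δ1) := hsumK
      _ ≤ δ / 4 + δ / 4 := add_le_add hbound1 hbound2
      _ = δ / 2 := by ring
  have habs : |(2*ε)⁻¹ * (∫ s in Set.Ioc (0:ℝ) t, S.indicator g s)
      - (∫ s in Set.Ioc (0:ℝ) t, f s ∂μW)| ≤ δ / 2 :=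
    abs_le.2 ⟨by linarith, by linarith⟩
  calc |(2*ε)⁻¹ * (∫ s in Set.Ioc (0:ℝ) t, S.indicator g s)
      - (∫ s in Set.Ioc (0:ℝ) t, f s ∂μW)| ≤ δ / 2 := habs
    _ < δ := by linarith
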